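/- The set C_CPT of CPT correlated equilibria is a proper subset of the simplex Δ^{|S|−1} if and only if the game Γ is non-trivial; equivalently, C_CPT = Δ^{|S|−1} if and only if h_i(s) = h_i(d_i, s_{−i}) for every player i, every s ∈ S, and every d_i ∈ S_i. -/
import Mathlib


/-- The decision-weight form of the CPT value of the prospect `(p, z)`, indexed by
a finite type `κ`, with reference point `r`, value function `v`, probability
weighting functions `wp` (for gains) and `wm` (for losses), computed using a
bijection `a` enumerating the indices so that `z` is decreasing. -/
noncomputable def cptVal {κ : Type*} [Fintype κ] (wp wm v : ℝ → ℝ) (r : ℝ)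
    (p z : κ → ℝ) (a : Fin (Fintype.card κ) ≃ κ) : ℝ :=
  ∑ j : Fin (Fintype.card κ),
    (if r ≤ z (a j) then
        wp (∑ k ∈ Finset.Iic j, p (a k)) - wp (∑ k ∈ Finset.Iio j, p (a k))
      else
        wm (∑ k ∈ Finset.Ici j, p (a k)) - wm (∑ k ∈ Finset.Ioi j, p (a k)))
      * v (z (a j))

/-- A canonical enumeration of `κ` ordering `z` decreasingly. -/
noncomputable def sortingEquiv {κ : Type*} [Fintype κ] (z : κ → ℝ) :
    Fin (Fintype.card κ) ≃ κ :=
  (Tuple.sort (fun j => -z ((Fintype.equivFin κ).symm j)) : Equiv.Perm _).trans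
    (Fintype.equivFin κ).symm

/-- The CPT value `V^r(p,z)` (independent of the choice of decreasing enumeration). -/
noncomputable def CPT {κ : Type*} [Fintype κ] (wp wm v : ℝ → ℝ) (r : ℝ)
    (p z : κ → ℝ) : ℝ :=
  cptVal wp wm v r p z (sortingEquiv z)

/-- `μ` is a probability distribution on the finite type `κ`. -/
def IsProbDist {κ : Type*} [Fintype κ] (μ : κ → ℝ) : Prop :=
  (∀ s, 0 ≤ μ s) ∧ ∑ s, μ s = 1

/-- The joint strategy obtained when player `i` plays `si` and the other players
play according to `s'`. -/
def combine {ι : Type*} [DecidableEq ι] {S : ι → Type*} (i : ι) (si : S i)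
    (s' : ∀ j : {j // j ≠ i}, S j) : ∀ j, S j :=
  fun j => if h : j = i then cast (congrArg S h.symm) si else s' ⟨j, h⟩

/-- The marginal probability `μ_i(s_i)` of player `i` playing `si` under the joint
distribution `μ`. -/
noncomputable def marginal {ι : Type*} [Fintype ι] [DecidableEq ι] {S : ι → Type*}
    [∀ j, Fintype (S j)] [∀ j, DecidableEq (S j)]
    (μ : (∀ j, S j) → ℝ) (i : ι) (si : S i) : ℝ :=
  ∑ s' : ∀ j : {j // j ≠ i}, S j, μ (combine i si s')

/-- The conditional distribution `μ_{-i}^{s_i}` on the joint strategies of the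
players other than `i`, given that player `i` is told to play `si`. -/
noncomputable def condDist {ι : Type*} [Fintype ι] [DecidableEq ι] {S : ι → Type*}
    [∀ j, Fintype (S j)] [∀ j, DecidableEq (S j)]
    (μ : (∀ j, S j) → ℝ) (i : ι) (si : S i) :
    (∀ j : {j // j ≠ i}, S j) → ℝ :=
  fun s' => μ (combine i si s') / marginal μ i si

/-- `μ` is a CPT correlated equilibrium of the game with payoff functions `pay`,
probability weighting functions `wp i`, `wm i`, value function family `v i r`,
and reference functions `ref i`. -/
noncomputable def IsCPTCorrEq {ι : Type*} [Fintype ι] [DecidableEq ι] {S : ι → Type*}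
    [∀ j, Fintype (S j)] [∀ j, DecidableEq (S j)]
    (pay : ∀ _ : ι, (∀ j, S j) → ℝ) (wp wm : ι → ℝ → ℝ) (v : ι → ℝ → ℝ → ℝ)
    (ref : ι → ((∀ j, S j) → ℝ) → ℝ) (μ : (∀ j, S j) → ℝ) : Prop :=
  IsProbDist μ ∧
    ∀ (i : ι) (si di : S i), 0 < marginal μ i si →
      CPT (wp i) (wm i) (v i (ref i μ)) (ref i μ) (condDist μ i si)
          (fun s' => pay i (combine i di s'))
        ≤ CPT (wp i) (wm i) (v i (ref i μ)) (ref i μ) (condDist μ i si)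
          (fun s' => pay i (combine i si s'))

section Aux

variable {ι : Type*} [DecidableEq ι] {S : ι → Type*}

lemma combine_apply_ne (i : ι) (si : S i) (s' : ∀ j : {j // j ≠ i}, S j)
    {j : ι} (h : j ≠ i) : combine i si s' j = s' ⟨j, h⟩ := by
  simp [combine, h]

lemma update_combine (i : ι) (si di : S i) (s' : ∀ j : {j // j ≠ i}, S j) :
    Function.update (combine i si s') i di = combine i di s' := by
  funext j
  by_cases h : j = i
  · subst h; simp [combine]
  · simp [Function.update_of_ne h, combine, h]

lemma combine_self (i : ι) (t : ∀ j, S j) :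
    combine i (t i) (fun j : {j // j ≠ i} => t j.1) = t := by
  funext j
  by_cases h : j = i
  · subst h; simp [combine]
  · simp [combine, h]

lemma combine_eq_iff (i : ι) (t : ∀ j, S j) (s' : ∀ j : {j // j ≠ i}, S j) :
    combine i (t i) s' = t ↔ s' = fun j : {j // j ≠ i} => t j.1 := by
  constructor
  · intro h
    funext j
    have hj := congrFun h j.1
    rw [combine_apply_ne i _ _ j.2] at hj
    simpa using hj
  · rintro rfl
    exact combine_self i t

lemma cptVal_pointmass {κ : Type*} [Fintype κ] [DecidableEq κ]
    (wp wm v : ℝ → ℝ) (r : ℝ) (z : κ → ℝ) (k0 : κ)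
    (a : Fin (Fintype.card κ) ≃ κ)
    (hwp0 : wp 0 = 0) (hwp1 : wp 1 = 1) (hwm0 : wm 0 = 0) (hwm1 : wm 1 = 1) :
    cptVal wp wm v r (fun k => if k = k0 then 1 else 0) z a = v (z k0) := by
  unfold cptVal
  set j0 := a.symm k0 with hj0
  have hak : a j0 = k0 := a.apply_symm_apply k0
  have hp : ∀ k : Fin (Fintype.card κ),
      (if a k = k0 then (1 : ℝ) else 0) = if k = j0 then 1 else 0 := by
    intro k
    simp [Equiv.apply_eq_iff_eq_symm_apply, hj0]
  have hsum : ∀ s : Finset (Fin (Fintype.card κ)),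
      ∑ k ∈ s, (if a k = k0 then (1 : ℝ) else 0) = if j0 ∈ s then 1 else 0 := by
    intro s
    simp only [hp]
    exact Finset.sum_ite_eq' s j0 (fun _ => 1)
  have hterm : ∀ j : Fin (Fintype.card κ),
      (if r ≤ z (a j) then
          wp (∑ k ∈ Finset.Iic j, (if a k = k0 then (1:ℝ) else 0))
            - wp (∑ k ∈ Finset.Iio j, (if a k = k0 then (1:ℝ) else 0))
        else
          wm (∑ k ∈ Finset.Ici j, (if a k = k0 then (1:ℝ) else 0))
            - wm (∑ k ∈ Finset.Ioi j, (if a k = k0 then (1:ℝ) else 0)))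
        * v (z (a j))
      = if j = j0 then v (z k0) else 0 := by
    intro j
    rw [hsum, hsum, hsum, hsum]
    simp only [Finset.mem_Iic, Finset.mem_Iio, Finset.mem_Ici, Finset.mem_Ioi]
    rcases lt_trichotomy j j0 with hlt | heq | hgt
    · have h1 : ¬ j0 ≤ j := not_le.mpr hlt
      have h2 : ¬ j0 < j := not_lt.mpr hlt.le
      have h3 : j ≤ j0 := hlt.le
      simp [h1, h2, h3, hlt, hwm1, hlt.ne]
    · subst heq
      simp [hwp0, hwp1, hwm0, hwm1, hak]
    · have h1 : j0 ≤ j := hgt.le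
      have h2 : ¬ j ≤ j0 := not_le.mpr hgt
      have h3 : ¬ j < j0 := not_lt.mpr hgt.le
      simp [h1, hgt, h2, h3, hwp1, hgt.ne']
  calc ∑ j, _ = ∑ j : Fin (Fintype.card κ), (if j = j0 then v (z k0) else 0) :=
        Finset.sum_congr rfl fun j _ => hterm j
    _ = v (z k0) := by simp

lemma CPT_pointmass {κ : Type*} [Fintype κ] [DecidableEq κ]
    (wp wm v : ℝ → ℝ) (r : ℝ) (z : κ → ℝ) (k0 : κ)
    (hwp0 : wp 0 = 0) (hwp1 : wp 1 = 1) (hwm0 : wm 0 = 0) (hwm1 : wm 1 = 1) :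
    CPT wp wm v r (fun k => if k = k0 then 1 else 0) z = v (z k0) :=
  cptVal_pointmass wp wm v r z k0 _ hwp0 hwp1 hwm0 hwm1

end Aux

/-- the set `C_CPT` of CPT correlated equilibria equals the whole
simplex `Δ^{|S|−1}` if and only if the game is trivial, i.e.
`h_i(s) = h_i(d_i, s_{−i})` for every player `i`, every joint strategy `s`, and
every deviation `d_i`.  (Equivalently, `C_CPT` is a proper subset of the simplex
iff the game is non-trivial.) -/
theorem cpt_correlated_eq_whole_simplex_iff_trivial
    {ι : Type*} [Fintype ι] [DecidableEq ι] {S : ι → Type*}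
    [∀ j, Fintype (S j)] [∀ j, DecidableEq (S j)]
    (pay : ∀ _ : ι, (∀ j, S j) → ℝ) (wp wm : ι → ℝ → ℝ) (v : ι → ℝ → ℝ → ℝ)
    (ref : ι → ((∀ j, S j) → ℝ) → ℝ)
    (hcard : ∀ i, 2 ≤ Fintype.card (S i))
    (hwp : ∀ i, ContinuousOn (wp i) (Set.Icc 0 1) ∧ StrictMonoOn (wp i) (Set.Icc 0 1)
      ∧ wp i 0 = 0 ∧ wp i 1 = 1)
    (hwm : ∀ i, ContinuousOn (wm i) (Set.Icc 0 1) ∧ StrictMonoOn (wm i) (Set.Icc 0 1)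
      ∧ wm i 0 = 0 ∧ wm i 1 = 1)
    (hv : ∀ i, Continuous (Function.uncurry (v i))
      ∧ ∀ r : ℝ, StrictMono (v i r) ∧ v i r r = 0)
    (href : ∀ i, ContinuousOn (ref i) {μ : (∀ j, S j) → ℝ | IsProbDist μ}) :
    {μ : (∀ j, S j) → ℝ | IsCPTCorrEq pay wp wm v ref μ}
        = {μ : (∀ j, S j) → ℝ | IsProbDist μ}
      ↔ ∀ (i : ι) (s : ∀ j, S j) (di : S i),
          pay i (Function.update s i di) = pay i s := by
  constructor
  · intro hset i
    have key : ∀ (t : ∀ j, S j) (d : S i),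
        pay i (Function.update t i d) ≤ pay i t := by
      intro t d
      set μ : (∀ j, S j) → ℝ := fun u => if u = t then 1 else 0 with hμ
      have hprob : IsProbDist μ := by
        constructor
        · intro u; by_cases h : u = t <;> simp [hμ, h]
        · simp [hμ, Finset.sum_ite_eq']
      have heq : IsCPTCorrEq pay wp wm v ref μ := by
        have : μ ∈ {μ : (∀ j, S j) → ℝ | IsCPTCorrEq pay wp wm v ref μ} := by
          rw [hset]; exact hprob
        exact this
      have hmarg : marginal μ i (t i) = 1 := by
        unfold marginal
        have : ∀ s' : ∀ j : {j // j ≠ i}, S j,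
            μ (combine i (t i) s') = if s' = (fun j : {j // j ≠ i} => t j.1) then 1 else 0 := by
          intro s'
          simp only [hμ]
          exact if_congr (combine_eq_iff i t s') rfl rfl
        simp only [this]
        simp [Finset.sum_ite_eq']
      have hcd : condDist μ i (t i) = fun s' => if s' = (fun j : {j // j ≠ i} => t j.1) then 1 else 0 := by
        funext s'
        unfold condDist
        rw [hmarg]
        simp only [hμ, div_one]
        exact if_congr (combine_eq_iff i t s') rfl rfl
      have h1 := heq.2 i (t i) d (by rw [hmarg]; norm_num)
      rw [hcd, CPT_pointmass _ _ _ _ _ _ (hwp i).2.2.1 (hwp i).2.2.2 (hwm i).2.2.1 (hwm i).2.2.2,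
        CPT_pointmass _ _ _ _ _ _ (hwp i).2.2.1 (hwp i).2.2.2 (hwm i).2.2.1 (hwm i).2.2.2] at h1
      have hmono := ((hv i).2 (ref i μ)).1
      have h2 : pay i (combine i d fun j : {j // j ≠ i} => t j.1) ≤ pay i (combine i (t i) fun j : {j // j ≠ i} => t j.1) :=
        hmono.le_iff_le.mp h1
      rw [combine_self] at h2
      rw [← update_combine i (t i) d, combine_self] at h2
      exact h2
    intro s di
    have h1 := key s di
    have h2 := key (Function.update s i di) (s i)
    rw [Function.update_idem, Function.update_eq_self] at h2
    exact le_antisymm h1 h2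
  · intro htriv
    ext μ
    simp only [Set.mem_setOf_eq]
    constructor
    · exact fun h => h.1
    · intro hprob
      refine ⟨hprob, ?_⟩
      intro i si di _
      have hfun : (fun s' => pay i (combine i di s')) = fun s' => pay i (combine i si s') := by
        funext s'
        have h := htriv i (combine i si s') di
        rwa [update_combine] at h
      rw [hfun]
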